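/- Let n ≥ 1 be an integer and let w_1, …, w_n be real numbers with 0 ≤ w_i ≤ 1 for all i. Then Σ_{i=1}^n w_i/√i ≤ 2 √(Σ_{i=1}^n w_i). -/
import Mathlib


open Finset

lemma key_step (S v m : ℝ) (hS : 0 ≤ S) (hv : 0 ≤ v) (hm : 0 < m) (hle : S + v ≤ m) :
    2 * Real.sqrt S + v / Real.sqrt m ≤ 2 * Real.sqrt (S + v) := by
  have ha : Real.sqrt S ^ 2 = S := Real.sq_sqrt hS
  have hb : Real.sqrt (S + v) ^ 2 = S + v := Real.sq_sqrt (by linarith)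
  have hc : Real.sqrt m ^ 2 = m := Real.sq_sqrt hm.le
  have hab : Real.sqrt S ≤ Real.sqrt (S + v) := Real.sqrt_le_sqrt (by linarith)
  have hbc : Real.sqrt (S + v) ≤ Real.sqrt m := Real.sqrt_le_sqrt hle
  have hcpos : 0 < Real.sqrt m := Real.sqrt_pos.mpr hm
  have ha0 : 0 ≤ Real.sqrt S := Real.sqrt_nonneg _
  have h : v / Real.sqrt m ≤ 2 * (Real.sqrt (S + v) - Real.sqrt S) := by
    rw [div_le_iff₀ hcpos]
    nlinarith [mul_le_mul_of_nonneg_left hbc (by linarith : (0:ℝ) ≤ Real.sqrt (S+v) - Real.sqrt S)]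
  linarith

/-- For weights w_i ∈ [0,1], Σ_{i=1}^n w_i/√i ≤ 2 √(Σ_{i=1}^n w_i). -/
theorem weighted_sqrt_sum (n : ℕ) (hn : 1 ≤ n) (w : ℕ → ℝ)
    (hw : ∀ i ∈ Finset.Icc 1 n, 0 ≤ w i ∧ w i ≤ 1) :
    ∑ i ∈ Finset.Icc 1 n, w i / Real.sqrt i ≤
      2 * Real.sqrt (∑ i ∈ Finset.Icc 1 n, w i) := by
  induction n with
  | zero => omega
  | succ n ih =>
    rcases Nat.eq_or_lt_of_le hn with h1 | h1
    · -- n + 1 = 1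
      have hn0 : n = 0 := by omega
      subst hn0
      simp only [Finset.Icc_self, Finset.sum_singleton, Nat.cast_one, Real.sqrt_one]
      obtain ⟨h0, h1'⟩ := hw 1 (by simp)
      have hs : Real.sqrt (w 1) * Real.sqrt (w 1) = w 1 := Real.mul_self_sqrt h0
      have hs1 : Real.sqrt (w 1) ≤ 1 := Real.sqrt_le_one.mpr h1'
      have : w 1 ≤ Real.sqrt (w 1) := by nlinarith [Real.sqrt_nonneg (w 1)]
      linarith [Real.sqrt_nonneg (w 1)]
    · have hn1 : 1 ≤ n := by omega
      have hsub : ∀ i ∈ Finset.Icc 1 n, 0 ≤ w i ∧ w i ≤ 1 := fun i hi => by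
        refine hw i ?_
        simp only [Finset.mem_Icc] at *; omega
      have ihn := ih hn1 hsub
      rw [Finset.sum_Icc_succ_top (by omega : 1 ≤ n + 1),
          Finset.sum_Icc_succ_top (by omega : 1 ≤ n + 1)]
      have hS0 : 0 ≤ ∑ i ∈ Finset.Icc 1 n, w i :=
        Finset.sum_nonneg fun i hi => (hsub i hi).1
      have hSle : (∑ i ∈ Finset.Icc 1 n, w i) + w (n + 1) ≤ ((n + 1 : ℕ) : ℝ) := by
        have : ∑ i ∈ Finset.Icc 1 n, w i ≤ ∑ i ∈ Finset.Icc 1 n, (1:ℝ) :=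
          Finset.sum_le_sum fun i hi => (hsub i hi).2
        simp only [Finset.sum_const, Nat.card_Icc, nsmul_eq_mul, mul_one] at this
        have hw1 := (hw (n+1) (by simp)).2
        push_cast at this ⊢
        linarith
      have hw0 : 0 ≤ w (n + 1) := (hw (n+1) (by simp)).1
      have hm : (0:ℝ) < (n + 1 : ℕ) := by positivity
      have := key_step (∑ i ∈ Finset.Icc 1 n, w i) (w (n+1)) ((n+1 : ℕ) : ℝ) hS0 hw0 hm hSle
      linarith
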